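/- Fix a > 0, growth factors F_1 ≤ ... ≤ F_g with F_1 > 0, and a transfer matrix Q with nonnegative entries and zero diagonal. For any N > g²/(a·F_1), any histogram H with b(H) ≥ a, and any g×g matrix r in the constraint set K(H) (nonnegative entries, row sums Σ_k r_{j,k} < F_j·H(j) for j ∈ spt(H), r_{j,k} = 0 if H(j) = 0 or Q_{j,k} = 0), there exists an N-rational matrix s ∈ K(H) (i.e., N·s has integer entries) with spt(s) = spt(r) and max_{j,k} |s_{j,k} − r_{j,k}| ≤ g/N. -/

import Mathlib

open Real Finset

def IsHistogram {g : ℕ} (H : Fin g → ℝ) : Prop :=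
  (∀ j, 0 ≤ H j) ∧ ∑ j, H j = 1

noncomputable def spt {g : ℕ} (H : Fin g → ℝ) : Finset (Fin g) :=
  Finset.univ.filter (fun j => 0 < H j)

/-- Membership in the mutation constraint set `K(H)`. -/
def MemK {g : ℕ} (F : Fin g → ℝ) (Q : Matrix (Fin g) (Fin g) ℝ)
    (H : Fin g → ℝ) (r : Matrix (Fin g) (Fin g) ℝ) : Prop :=
  (∀ j k, 0 ≤ r j k) ∧
  (∀ j, 0 < H j → ∑ k, r j k < F j * H j) ∧
  (∀ j k, H j = 0 → r j k = 0) ∧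
  (∀ j k, Q j k = 0 → r j k = 0)

/-- Rounding helper: bounds for `max 1 ⌊N x⌋₊ / N`. -/
lemma round_aux (N : ℕ) (hN : 0 < (N : ℝ)) (x : ℝ) (hx : 0 ≤ x) :
    0 < ((max 1 ⌊(N : ℝ) * x⌋₊ : ℕ) : ℝ) / N ∧
    ((max 1 ⌊(N : ℝ) * x⌋₊ : ℕ) : ℝ) / N ≤ x + 1 / N ∧
    x - 1 / N ≤ ((max 1 ⌊(N : ℝ) * x⌋₊ : ℕ) : ℝ) / N := by
  have hfl : (⌊(N : ℝ) * x⌋₊ : ℝ) ≤ (N : ℝ) * x := Nat.floor_le (by positivity)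
  have hfl2 : (N : ℝ) * x < (⌊(N : ℝ) * x⌋₊ : ℝ) + 1 := Nat.lt_floor_add_one _
  have hone : (1 : ℝ) ≤ ((max 1 ⌊(N : ℝ) * x⌋₊ : ℕ) : ℝ) := by
    exact_mod_cast Nat.le_max_left 1 _
  have hle : (⌊(N : ℝ) * x⌋₊ : ℝ) ≤ ((max 1 ⌊(N : ℝ) * x⌋₊ : ℕ) : ℝ) := by
    exact_mod_cast Nat.le_max_right 1 _
  have hub : ((max 1 ⌊(N : ℝ) * x⌋₊ : ℕ) : ℝ) ≤ (N : ℝ) * x + 1 := by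
    rcases max_cases 1 ⌊(N : ℝ) * x⌋₊ with ⟨h, _⟩ | ⟨h, _⟩ <;> rw [h] <;> push_cast <;>
      nlinarith
  refine ⟨div_pos (by linarith) hN, ?_, ?_⟩
  · rw [div_le_iff₀ hN]
    have : (x + 1 / N) * N = x * N + 1 := by field_simp
    rw [this]; nlinarith
  · rw [le_div_iff₀ hN]
    have : (x - 1 / N) * N = x * N - 1 := by field_simp
    rw [this]; nlinarith

set_option maxHeartbeats 1000000 in
/-- Density of `N`-rational matrices in the constraint set `K(H)`: for
`N > g²/(a·F₁)`, any `r ∈ K(H)` with `b(H) ≥ a` admits an `N`-rational matrix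
`s ∈ K(H)` with the same support and `‖s − r‖ ≤ g/N`. -/
theorem density_of_rational_matrices {g : ℕ} (hg : 0 < g)
    (a : ℝ) (ha : 0 < a)
    (F : Fin g → ℝ) (hFpos : ∀ j, 0 < F j) (hFmono : Monotone F)
    (Q : Matrix (Fin g) (Fin g) ℝ) (hQ : ∀ j k, 0 ≤ Q j k) (hQd : ∀ j, Q j j = 0)
    (N : ℕ) (hN : (g : ℝ) ^ 2 / (a * F ⟨0, hg⟩) < N)
    (H : Fin g → ℝ) (hH : IsHistogram H) (hne : (spt H).Nonempty)
    (hb : a ≤ (spt H).inf' hne H)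
    (r : Matrix (Fin g) (Fin g) ℝ) (hr : MemK F Q H r) :
    ∃ s : Matrix (Fin g) (Fin g) ℝ,
      MemK F Q H s ∧
      (∀ j k, ∃ n : ℕ, s j k = (n : ℝ) / N) ∧
      (∀ j k, 0 < s j k ↔ 0 < r j k) ∧
      (∀ j k, |s j k - r j k| ≤ (g : ℝ) / N) := by
  obtain ⟨hrnn, hrsum, hrH, hrQ⟩ := hr
  have hg1 : (1 : ℝ) ≤ g := by exact_mod_cast hg
  have hF0 : 0 < a * F ⟨0, hg⟩ := mul_pos ha (hFpos _)
  have hN0 : 0 < (N : ℝ) := by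
    have : 0 < (g : ℝ) ^ 2 / (a * F ⟨0, hg⟩) := by positivity
    linarith
  have hgN : (g : ℝ) ^ 2 < N * (a * F ⟨0, hg⟩) := by
    rw [div_lt_iff₀ hF0] at hN; linarith
  -- the shrinking factor per row
  set ε : Fin g → ℝ := fun j => ((g : ℝ) - 1) / ((N : ℝ) * (F j * H j)) with hεdef
  have key : ∀ j : Fin g, 0 < H j →
      0 ≤ ε j ∧ ε j < 1 ∧ ε j * (F j * H j) = ((g : ℝ) - 1) / N := by
    intro j hj
    have hFHj : 0 < F j * H j := mul_pos (hFpos j) hj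
    have hHa : a ≤ H j := by
      refine le_trans hb (Finset.inf'_le _ ?_)
      simp [spt, hj]
    have hFle : F ⟨0, hg⟩ ≤ F j := hFmono (by simp [Fin.le_def])
    have haF : a * F ⟨0, hg⟩ ≤ F j * H j := by nlinarith [hFpos j, (hFpos ⟨0, hg⟩)]
    have hNFH : (g : ℝ) - 1 < (N : ℝ) * (F j * H j) := by nlinarith
    refine ⟨div_nonneg (by linarith) (by positivity), ?_, ?_⟩
    · rw [div_lt_one (by positivity)]; exact hNFH
    · simp only [hεdef]
      rw [div_mul_eq_mul_div, mul_div_mul_right _ _ hFHj.ne']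
  -- the candidate matrix
  refine ⟨fun j k => if r j k = 0 then 0 else
      ((max 1 ⌊(N : ℝ) * ((1 - ε j) * r j k)⌋₊ : ℕ) : ℝ) / N, ?_, ?_, ?_, ?_⟩
  · -- MemK
    have hHpos : ∀ j k, r j k ≠ 0 → 0 < H j := by
      intro j k h
      rcases (hH.1 j).lt_or_eq with h' | h'
      · exact h'
      · exact absurd (hrH j k h'.symm) h
    refine ⟨?_, ?_, ?_, ?_⟩
    · intro j k
      by_cases h : r j k = 0 <;> simp [h]
      positivity
    · intro j hj
      obtain ⟨hε0, hε1, hεeq⟩ := key j hj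
      have hrow := hrsum j hj
      set S : Finset (Fin g) := Finset.univ.filter (fun k => r j k ≠ 0) with hS
      have hjS : j ∉ S := by simp [hS, hrQ j j (hQd j)]
      have hcard : (S.card : ℝ) ≤ (g : ℝ) - 1 := by
        have hsub : S ⊆ Finset.univ.erase j := by
          intro k hk
          exact Finset.mem_erase.2 ⟨fun hkj => hjS (hkj ▸ hk), Finset.mem_univ k⟩
        have h1 : S.card ≤ g - 1 := by
          have := Finset.card_le_card hsub
          rwa [Finset.card_erase_of_mem (Finset.mem_univ j), Finset.card_univ,
            Fintype.card_fin] at this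
        calc (S.card : ℝ) ≤ ((g - 1 : ℕ) : ℝ) := by exact_mod_cast h1
          _ = (g : ℝ) - 1 := by rw [Nat.cast_sub hg]; norm_num
      have hterm : ∀ k : Fin g,
          (if r j k = 0 then (0:ℝ) else
            ((max 1 ⌊(N : ℝ) * ((1 - ε j) * r j k)⌋₊ : ℕ) : ℝ) / N)
          ≤ (if r j k = 0 then (0:ℝ) else (1 - ε j) * r j k + 1 / N) := by
        intro k
        by_cases h : r j k = 0
        · simp [h]
        · simp only [h, if_false]
          exact (round_aux N hN0 _ (by nlinarith [hrnn j k])).2.1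
      calc ∑ k, (if r j k = 0 then (0:ℝ) else
              ((max 1 ⌊(N : ℝ) * ((1 - ε j) * r j k)⌋₊ : ℕ) : ℝ) / N)
          ≤ ∑ k, (if r j k = 0 then (0:ℝ) else (1 - ε j) * r j k + 1 / N) :=
            Finset.sum_le_sum fun k _ => hterm k
        _ = ∑ k ∈ S, ((1 - ε j) * r j k + 1 / N) := by
            rw [hS, Finset.sum_filter]
            congr 1; ext k
            by_cases h : r j k = 0 <;> simp [h]
        _ = (1 - ε j) * (∑ k ∈ S, r j k) + (S.card : ℝ) / N := by
            rw [Finset.sum_add_distrib, Finset.mul_sum]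
            congr 1
            rw [Finset.sum_const, nsmul_eq_mul, one_div, div_eq_mul_inv]
        _ ≤ (1 - ε j) * (∑ k, r j k) + ((g : ℝ) - 1) / N := by
            have h1 : ∑ k ∈ S, r j k ≤ ∑ k, r j k :=
              Finset.sum_le_sum_of_subset_of_nonneg (Finset.filter_subset _ _)
                (fun k _ _ => hrnn j k)
            have h2 : (S.card : ℝ) / N ≤ ((g : ℝ) - 1) / N := by gcongr
            have h3 : (0:ℝ) ≤ 1 - ε j := by linarith
            nlinarith
        _ < (1 - ε j) * (F j * H j) + ((g : ℝ) - 1) / N := by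
            gcongr
        _ = F j * H j := by nlinarith [hεeq]
    · intro j k h
      simp [hrH j k h]
    · intro j k h
      simp [hrQ j k h]
  · intro j k
    dsimp only
    by_cases h : r j k = 0
    · exact ⟨0, by simp [h]⟩
    · exact ⟨max 1 ⌊(N : ℝ) * ((1 - ε j) * r j k)⌋₊, by simp [h]⟩
  · intro j k
    dsimp only
    by_cases h : r j k = 0
    · simp [h]
    · have hj : 0 < H j := by
        rcases (hH.1 j).lt_or_eq with h' | h'
        · exact h'
        · exact absurd (hrH j k h'.symm) h
      obtain ⟨hε0, hε1, hεeq⟩ := key j hj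
      have := (round_aux N hN0 ((1 - ε j) * r j k) (by nlinarith [hrnn j k])).1
      simp only [h, if_false]
      constructor
      · intro _; exact lt_of_le_of_ne (hrnn j k) (Ne.symm h)
      · intro _; exact this
  · intro j k
    dsimp only
    by_cases h : r j k = 0
    · rw [if_pos h, h, sub_zero, abs_zero]
      positivity
    · have hj : 0 < H j := by
        rcases (hH.1 j).lt_or_eq with h' | h'
        · exact h'
        · exact absurd (hrH j k h'.symm) h
      obtain ⟨hε0, hε1, hεeq⟩ := key j hj
      have hrk : 0 ≤ r j k := hrnn j k
      have hx : 0 ≤ (1 - ε j) * r j k := by nlinarith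
      obtain ⟨_, hub, hlb⟩ := round_aux N hN0 ((1 - ε j) * r j k) hx
      have hFF : r j k < F j * H j := by
        have h1 := hrsum j hj
        have h2 : r j k ≤ ∑ m, r j m :=
          Finset.single_le_sum (fun m _ => hrnn j m) (Finset.mem_univ k)
        linarith
      have hεr : ε j * r j k ≤ ((g : ℝ) - 1) / N := by
        calc ε j * r j k ≤ ε j * (F j * H j) := by nlinarith
          _ = ((g : ℝ) - 1) / N := hεeq
      simp only [h, if_false]
      rw [abs_le]
      constructor
      · -- -(g/N) ≤ s - r
        have heq : (1 - ε j) * r j k = r j k - ε j * r j k := by ring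
        have h1N : (1:ℝ) / N + ((g:ℝ) - 1) / N = (g:ℝ) / N := by
          rw [← add_div]; ring_nf
        linarith
      · have : (1 - ε j) * r j k ≤ r j k := by nlinarith
        have h1N : (1:ℝ) / N ≤ (g:ℝ) / N := by gcongr
        linarith
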